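/- Let n ≥ 1, l ∈ [0,2n], and 𝐚 = (a_1,…,a_l) a strictly increasing sequence of integers in [1,2n]. Then the sequence red(𝐚) = (b_1,…,b_k) is symplectic, i.e., b_i ≥ 2i − 1 for all i ∈ [1,k]; moreover its length k satisfies 0 ≤ k ≤ min(l, 2n − l) and l − k is even. -/

import Mathlib

/-- `remAux` computes the set of removable entries of a strictly increasing
sequence, given as a list in *reversed* order (so the head is the last entry). -/
def remAux : List ℕ → Finset ℕ
  | [] => ∅
  | [_] => ∅
  | b :: a :: rest =>
    if Even b ∧ a + 1 = b ∧ b + (remAux rest).card + 1 < 2 * (rest.length + 2) then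
      insert a (insert b (remAux rest))
    else remAux (a :: rest)

/-- `remSet 𝐚` : the set `Rem(𝐚)` of removable entries of the strictly
increasing sequence `𝐚 = (a_1, …, a_l)` (given in its natural order). -/
def remSet (l : List ℕ) : Finset ℕ := remAux l.reverse

/-- `redSeq 𝐚` : the reduction `red(𝐚)`, i.e. `𝐚` with the removable entries
removed. -/
def redSeq (l : List ℕ) : List ℕ := l.filter (fun x => decide (x ∉ remSet l))

lemma mem_remAux : ∀ {r : List ℕ} {x : ℕ}, x ∈ remAux r → x ∈ r := by
  intro r
  induction r using remAux.induct with
  | case1 => simp [remAux]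
  | case2 x => simp [remAux]
  | case3 b a rest h ih =>
    intro x hx
    rw [remAux, if_pos h] at hx
    simp only [Finset.mem_insert] at hx
    rcases hx with h1 | h1 | h1
    · simp [h1]
    · simp [h1]
    · exact List.mem_cons_of_mem _ (List.mem_cons_of_mem _ (ih h1))
  | case4 b a rest h ih1 ih2 =>
    intro x hx
    rw [remAux, if_neg h] at hx
    exact List.mem_cons_of_mem _ (ih2 hx)

lemma card_pair {b a : ℕ} {rest : List ℕ} (hp : (b :: a :: rest).Pairwise (· > ·)) :
    (insert a (insert b (remAux rest))).card = (remAux rest).card + 2 := by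
  rw [List.pairwise_cons, List.pairwise_cons] at hp
  obtain ⟨hb, ha, _⟩ := hp
  have hab : b > a := hb a (by simp)
  have hbr : b ∉ remAux rest := by
    intro h
    have := hb b (List.mem_cons_of_mem a (mem_remAux h))
    omega
  have har : a ∉ remAux rest := by
    intro h
    have := ha a (mem_remAux h)
    omega
  have h1 : a ∉ insert b (remAux rest) := by
    simp only [Finset.mem_insert]
    push_neg
    exact ⟨by omega, har⟩
  rw [Finset.card_insert_of_notMem h1, Finset.card_insert_of_notMem hbr]

lemma card_even : ∀ {r : List ℕ}, r.Pairwise (· > ·) → Even (remAux r).card := by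
  intro r
  induction r using remAux.induct with
  | case1 => simp [remAux]
  | case2 x => simp [remAux]
  | case3 b a rest h ih =>
    intro hp
    rw [remAux, if_pos h, card_pair hp]
    obtain ⟨u, hu⟩ := ih hp.of_cons.of_cons
    exact ⟨u + 1, by omega⟩
  | case4 b a rest h ih1 ih2 =>
    intro hp
    rw [remAux, if_neg h]
    exact ih2 hp.of_cons

lemma card_mono : ∀ (t : List ℕ) (x : ℕ), (x :: t).Pairwise (· > ·) →
    (remAux t).card ≤ (remAux (x :: t)).card ∧
    (remAux (x :: t)).card ≤ (remAux t).card + 2 := by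
  intro t
  induction t with
  | nil => intro x _; simp [remAux]
  | cons y t' ih =>
    intro x hp
    rw [remAux]
    split_ifs with h
    · rw [card_pair hp]
      have h1 := ih y hp.of_cons
      omega
    · omega

lemma filter_len : ∀ {r : List ℕ}, r.Pairwise (· > ·) →
    (r.filter (fun x => decide (x ∉ remAux r))).length + (remAux r).card = r.length := by
  intro r
  induction r using remAux.induct with
  | case1 => simp [remAux]
  | case2 x => simp [remAux]
  | case3 b a rest h ih =>
    intro hp
    have heq : remAux (b :: a :: rest) = insert a (insert b (remAux rest)) := by
      rw [remAux, if_pos h]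
    have hcp := card_pair hp
    rw [List.pairwise_cons, List.pairwise_cons] at hp
    obtain ⟨hb, ha, hrest⟩ := hp
    rw [heq, hcp]
    simp only [List.filter_cons]
    have h1 : (decide (b ∉ insert a (insert b (remAux rest)))) = false := by simp
    have h2 : (decide (a ∉ insert a (insert b (remAux rest)))) = false := by simp
    rw [h1, h2]
    simp only [Bool.false_eq_true, if_false]
    have h3 : rest.filter (fun x => decide (x ∉ insert a (insert b (remAux rest))))
        = rest.filter (fun x => decide (x ∉ remAux rest)) := by
      apply List.filter_congr
      intro x hx
      have hxa := ha x hx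
      have hxb := hb x (List.mem_cons_of_mem a hx)
      simp only [decide_eq_decide, Finset.mem_insert]
      simp [show x ≠ a by omega, show x ≠ b by omega]
    rw [h3]
    have := ih hrest
    simp only [List.length_cons]
    omega
  | case4 b a rest h ih1 ih2 =>
    intro hp
    have heq : remAux (b :: a :: rest) = remAux (a :: rest) := by
      rw [remAux, if_neg h]
    have hbn : b ∉ remAux (a :: rest) := by
      intro hmem
      have hm := mem_remAux hmem
      rw [List.pairwise_cons] at hp
      have := hp.1 b hm
      omega
    rw [heq]
    have h1 : (decide (b ∉ remAux (a :: rest))) = true := by simpa using hbn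
    rw [show (b :: a :: rest).filter (fun x => decide (x ∉ remAux (a :: rest)))
        = b :: (a :: rest).filter (fun x => decide (x ∉ remAux (a :: rest))) from by
      rw [List.filter_cons, h1]; simp]
    have := ih2 hp.of_cons
    simp only [List.length_cons] at *
    omega

lemma filter_case3 {b a : ℕ} {rest : List ℕ}
    (h : Even b ∧ a + 1 = b ∧ b + (remAux rest).card + 1 < 2 * (rest.length + 2))
    (hp : (b :: a :: rest).Pairwise (· > ·)) :
    (b :: a :: rest).filter (fun x => decide (x ∉ remAux (b :: a :: rest)))
      = rest.filter (fun x => decide (x ∉ remAux rest)) := by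
  have heq : remAux (b :: a :: rest) = insert a (insert b (remAux rest)) := by
    rw [remAux, if_pos h]
  rw [List.pairwise_cons, List.pairwise_cons] at hp
  obtain ⟨hb, ha, hrest⟩ := hp
  rw [heq]
  simp only [List.filter_cons]
  have h1 : (decide (b ∉ insert a (insert b (remAux rest)))) = false := by simp
  have h2 : (decide (a ∉ insert a (insert b (remAux rest)))) = false := by simp
  rw [h1, h2]
  simp only [Bool.false_eq_true, if_false]
  apply List.filter_congr
  intro x hx
  have hxa := ha x hx
  have hxb := hb x (List.mem_cons_of_mem a hx)
  simp only [decide_eq_decide, Finset.mem_insert]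
  simp [show x ≠ a by omega, show x ≠ b by omega]

lemma filter_case4 {b a : ℕ} {rest : List ℕ}
    (h : ¬(Even b ∧ a + 1 = b ∧ b + (remAux rest).card + 1 < 2 * (rest.length + 2)))
    (hp : (b :: a :: rest).Pairwise (· > ·)) :
    (b :: a :: rest).filter (fun x => decide (x ∉ remAux (b :: a :: rest)))
      = b :: (a :: rest).filter (fun x => decide (x ∉ remAux (a :: rest))) := by
  have heq : remAux (b :: a :: rest) = remAux (a :: rest) := by
    rw [remAux, if_neg h]
  have hbn : b ∉ remAux (a :: rest) := by
    intro hmem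
    have hm := mem_remAux hmem
    rw [List.pairwise_cons] at hp
    have := hp.1 b hm
    omega
  rw [heq, List.filter_cons]
  simp [hbn]

lemma symp : ∀ {r : List ℕ}, r.Pairwise (· > ·) → (∀ x ∈ r, 1 ≤ x) →
    ∀ i, i < (r.filter (fun x => decide (x ∉ remAux r))).length →
      2 * ((r.filter (fun x => decide (x ∉ remAux r))).length - i)
        ≤ (r.filter (fun x => decide (x ∉ remAux r))).getD i 0 + 1 := by
  intro r
  induction r using remAux.induct with
  | case1 => intro _ _ i hi; simp at hi
  | case2 x =>
    intro _ hpos i hi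
    have hx := hpos x (by simp)
    simp only [remAux, Finset.notMem_empty, not_false_iff, decide_true,
      List.filter_cons, if_true, List.filter_nil, List.length_cons, List.length_nil] at hi ⊢
    have : i = 0 := by omega
    subst this
    simp only [List.getD_cons_zero]
    omega
  | case3 b a rest h ih =>
    intro hp hpos i hi
    rw [filter_case3 h hp] at hi ⊢
    exact ih hp.of_cons.of_cons (fun x hx => hpos x (by simp [hx])) i hi
  | case4 b a rest h ih1 ih2 =>
    intro hp hpos i hi
    rw [filter_case4 h hp] at hi ⊢
    set s' := (a :: rest).filter (fun x => decide (x ∉ remAux (a :: rest))) with hs'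
    have hptail := hp.of_cons
    have hpos' : ∀ x ∈ a :: rest, 1 ≤ x := fun x hx => hpos x (List.mem_cons_of_mem b hx)
    match i with
    | Nat.succ j =>
      simp only [List.length_cons, List.getD_cons_succ]
      have hj : j < s'.length := by simpa using hi
      have := ih2 hptail hpos' j hj
      calc 2 * (s'.length + 1 - (j + 1)) = 2 * (s'.length - j) := by omega
        _ ≤ s'.getD j 0 + 1 := this
    | 0 =>
      simp only [List.length_cons, List.getD_cons_zero, Nat.sub_zero]
      -- goal : 2 * (s'.length + 1) ≤ b + 1
      have hfl := filter_len hptail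
      rw [← hs'] at hfl
      by_cases hba : Even b ∧ a + 1 = b
      · have hnum : ¬ (b + (remAux rest).card + 1 < 2 * (rest.length + 2)) := by
          intro hc; exact h ⟨hba.1, hba.2, hc⟩
        have hcm := (card_mono rest a hptail).1
        simp only [List.length_cons] at hfl
        omega
      · rcases Nat.eq_zero_or_pos s'.length with h0 | h0
        · have hb1 := hpos b (by simp)
          omega
        · have h00 : 0 < s'.length := h0
          have hhead := ih2 hptail hpos' 0 h00
          have hgd : s'.getD 0 0 = s'[0] := List.getD_eq_getElem s' 0 h00
          have hmem : s'[0] ∈ a :: rest := List.mem_of_mem_filter (List.getElem_mem _)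
          have hle : s'[0] ≤ a := by
            rcases List.mem_cons.1 hmem with he | hm
            · omega
            · have := (List.pairwise_cons.1 hptail).1 _ hm
              omega
          have hab : a < b := (List.pairwise_cons.1 hp).1 a (by simp)
          simp only [Nat.sub_zero] at hhead
          rw [hgd] at hhead
          rcases Nat.even_or_odd b with he | ho
          · have hne : a + 1 ≠ b := fun hc => hba ⟨he, hc⟩
            omega
          · obtain ⟨w, hw⟩ := ho
            omega

lemma bound : ∀ {r : List ℕ}, ∀ m : ℕ, Even m → r.Pairwise (· > ·) →
    (∀ x ∈ r, 1 ≤ x ∧ x ≤ m) → 2 * r.length ≤ m + (remAux r).card := by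
  intro r
  induction r using remAux.induct with
  | case1 => intro m _ _ _; simp
  | case2 x =>
    intro m hm _ hx
    obtain ⟨u, hu⟩ := hm
    have := hx x (by simp)
    simp only [List.length_cons, List.length_nil, remAux]
    omega
  | case3 b a rest h ih =>
    intro m hm hp hx
    obtain ⟨hbe, hab, hnum⟩ := h
    have heq : remAux (b :: a :: rest) = insert a (insert b (remAux rest)) := by
      rw [remAux, if_pos ⟨hbe, hab, hnum⟩]
    rw [heq, card_pair hp]
    obtain ⟨v, hv⟩ := hbe
    have hb2 : 2 ≤ b := by
      have := hx a (by simp)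
      omega
    have hm2 : Even (b - 2) := ⟨v - 1, by omega⟩
    rw [List.pairwise_cons, List.pairwise_cons] at hp
    obtain ⟨hb, ha, hrest⟩ := hp
    have hxr : ∀ x ∈ rest, 1 ≤ x ∧ x ≤ b - 2 := by
      intro x hxm
      have h1 := ha x hxm
      have h2 := (hx x (by simp [hxm])).1
      omega
    have := ih (b - 2) hm2 hrest hxr
    have hbm := (hx b (by simp)).2
    simp only [List.length_cons] at *
    omega
  | case4 b a rest h ih1 ih2 =>
    intro m hm hp hx
    have heq : remAux (b :: a :: rest) = remAux (a :: rest) := by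
      rw [remAux, if_neg h]
    rw [heq]
    have hptail := hp.of_cons
    have hab : a < b := by
      rw [List.pairwise_cons] at hp
      exact hp.1 a (by simp)
    obtain ⟨u, hu⟩ := hm
    have hbm := (hx b (by simp)).2
    have ha1 := (hx a (by simp)).1
    by_cases hba : Even b ∧ a + 1 = b
    · -- numeric condition fails
      have hnum : ¬ (b + (remAux rest).card + 1 < 2 * (rest.length + 2)) := by
        intro hc; exact h ⟨hba.1, hba.2, hc⟩
      obtain ⟨w, hw⟩ := hba.1
      obtain ⟨p, hpp⟩ := card_even (hptail.of_cons)
      have hcm := (card_mono rest a hptail).1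
      simp only [List.length_cons] at *
      omega
    · -- a ≤ m - 2
      have ham : a + 2 ≤ m := by
        rcases Nat.even_or_odd b with he | ho
        · have : a + 1 ≠ b := fun hc => hba ⟨he, hc⟩
          omega
        · obtain ⟨w, hw⟩ := ho
          omega
      have hm2 : Even (m - 2) := ⟨u - 1, by omega⟩
      have hpt2 : ∀ y ∈ rest, a > y := (List.pairwise_cons.1 hptail).1
      have hxt : ∀ x ∈ a :: rest, 1 ≤ x ∧ x ≤ m - 2 := by
        intro x hxm
        have h1 := (hx x (List.mem_cons_of_mem b hxm)).1
        have h2 : x ≤ a := by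
          rcases List.mem_cons.1 hxm with rfl | hxm'
          · exact le_refl _
          · exact le_of_lt (hpt2 x hxm')
        exact ⟨h1, by omega⟩
      have := ih2 (m - 2) hm2 hptail hxt
      simp only [List.length_cons] at *
      omega

theorem stmt14 (n : ℕ) (hn : 1 ≤ n) (a : List ℕ)
    (hinc : a.Chain' (· < ·)) (hbd : ∀ x ∈ a, 1 ≤ x ∧ x ≤ 2 * n)
    (hlen : a.length ≤ 2 * n) :
    (∀ i, 1 ≤ i → i ≤ (redSeq a).length →
      2 * i - 1 ≤ (redSeq a).getD (i - 1) 0) ∧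
    (redSeq a).length ≤ min a.length (2 * n - a.length) ∧
    Even (a.length - (redSeq a).length) := by
  have h1 : a.Pairwise (· < ·) := List.isChain_iff_pairwise.mp hinc
  have hp : a.reverse.Pairwise (· > ·) := List.pairwise_reverse.mpr h1
  have hmemr : ∀ x, x ∈ a.reverse ↔ x ∈ a := fun x => List.mem_reverse
  have hsrev : a.reverse.filter (fun x => decide (x ∉ remAux a.reverse))
      = (redSeq a).reverse := by
    rw [redSeq, remSet, List.filter_reverse]
  have hfl := filter_len hp
  rw [hsrev] at hfl
  simp only [List.length_reverse] at hfl
  have hev := card_even hp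
  have hbound := bound (2 * n) ⟨n, by ring⟩ hp
    (fun x hx => hbd x ((hmemr x).mp hx))
  simp only [List.length_reverse] at hbound
  refine ⟨?_, ?_, ?_⟩
  · intro i hi1 hi2
    set k := (redSeq a).length with hk
    have hik : k - i < k := by omega
    have hsy := symp hp (fun x hx => (hbd x ((hmemr x).mp hx)).1) (k - i)
      (by rw [hsrev]; simp only [List.length_reverse]; omega)
    rw [hsrev] at hsy
    simp only [List.length_reverse] at hsy
    have hgd : (redSeq a).reverse.getD (k - i) 0 = (redSeq a).getD (i - 1) 0 := by
      rw [List.getD_eq_getElem _ _ (by simp only [List.length_reverse]; omega),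
          List.getD_eq_getElem _ _ (by omega : i - 1 < k)]
      rw [List.getElem_reverse]
      congr 1
      simp only [List.length_reverse, ← hk]
      omega
    rw [hgd] at hsy
    have : k - (k - i) = i := by omega
    rw [this] at hsy
    omega
  · have : (redSeq a).length ≤ a.length := by omega
    refine le_min this (by omega)
  · have : a.length - (redSeq a).length = (remAux a.reverse).card := by omega
    rw [this]
    exact hev
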